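/- Let M = M_{p^α, bp^α} be a local singular ACM with α = β > 1. Then the catenary degree of M is 3. -/

import Mathlib

/-- Membership in the arithmetical congruence monoid `M_{a,b} = (a + b ℕ₀) ∪ {1}`. -/
def acmMem (a b x : ℕ) : Prop := x = 1 ∨ ∃ k : ℕ, x = a + k * b

/-- `x` is an atom (irreducible) of `M_{a,b}`. -/
def acmAtom (a b x : ℕ) : Prop :=
  acmMem a b x ∧ x ≠ 1 ∧
    ∀ y z : ℕ, acmMem a b y → acmMem a b z → x = y * z → y = 1 ∨ z = 1

/-- `s` is a factorization of `x` into atoms of `M_{a,b}`. -/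
def acmFactorization (a b x : ℕ) (s : Multiset ℕ) : Prop :=
  (∀ u ∈ s, acmAtom a b u) ∧ s.prod = x

/-- The distance between two factorizations. -/
def facDist (s t : Multiset ℕ) : ℕ := max (Multiset.card (s - t)) (Multiset.card (t - s))

/-- There is an `N`-chain of factorizations of `x` from `z₁` to `z₂` in `M_{a,b}`. -/
def acmNChain (a b x N : ℕ) (z₁ z₂ : Multiset ℕ) : Prop :=
  ∃ L : List (Multiset ℕ), L ≠ [] ∧ L.head? = some z₁ ∧ L.getLast? = some z₂ ∧
    (∀ z ∈ L, acmFactorization a b x z) ∧ L.Chain' (fun s t => facDist s t ≤ N)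

/-- The set of `N` such that any two factorizations of any element of `M_{a,b}`
are connected by an `N`-chain; `c(M) = n` iff `n` is the least element of this set. -/
def acmCatSet (a b : ℕ) : Set ℕ :=
  {N | ∀ x, acmMem a b x → ∀ z₁ z₂, acmFactorization a b x z₁ →
      acmFactorization a b x z₂ → acmNChain a b x N z₁ z₂}

/-- Divisibility inside the monoid `M_{a,b}`. -/
def acmDvd (a b x y : ℕ) : Prop := ∃ k, acmMem a b k ∧ x * k = y

/-- `s` is a bullet of `x` in `M_{a,b}`. -/
def acmBullet (a b x : ℕ) (s : Multiset ℕ) : Prop :=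
  (∀ u ∈ s, acmAtom a b u) ∧ acmDvd a b x s.prod ∧
    ∀ t : Multiset ℕ, t ≤ s → t ≠ s → ¬ acmDvd a b x t.prod

/-- Omega primality of `x` in `M_{a,b}`: the sup of the lengths of bullets of `x`. -/
noncomputable def acmOmega (a b x : ℕ) : ℕ∞ :=
  sSup {n : ℕ∞ | ∃ s : Multiset ℕ, acmBullet a b x s ∧ (Multiset.card s : ℕ∞) = n}

/-- The set of factorization lengths of `x` in `M_{a,b}`. -/
def acmLengthSet (a b x : ℕ) : Set ℕ :=
  {n | ∃ s : Multiset ℕ, acmFactorization a b x s ∧ Multiset.card s = n}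

/-- `x` has at least two distinct factorization lengths. -/
def acmLI (a b x : ℕ) : Prop := ∃ m ∈ acmLengthSet a b x, ∃ n ∈ acmLengthSet a b x, m ≠ n

/-- The length density of an element `x` of `M_{a,b}`. -/
noncomputable def acmLD (a b x : ℕ) : ℝ :=
  (((acmLengthSet a b x).ncard : ℝ) - 1) /
    (((sSup (acmLengthSet a b x) : ℕ) : ℝ) - ((sInf (acmLengthSet a b x) : ℕ) : ℝ))


namespace AuxACM

variable {p b α : ℕ}

lemma hb0 (hpb : ¬ p ∣ b) : b ≠ 0 := by rintro rfl; exact hpb (dvd_zero p)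

lemma hpa2 (hp : p.Prime) (hα : 1 < α) : 2 ≤ p ^ α :=
  le_trans hp.two_le (Nat.le_self_pow (by omega) p)

/-- p^α ≡ 1 mod b -/
lemma pow_alpha_one (hp : p.Prime) (hpb : ¬ p ∣ b) (hα : 1 < α)
    (hacm : p ^ α * p ^ α ≡ p ^ α [MOD b * p ^ α]) : p ^ α ≡ 1 [MOD b] := by
  have h1 : 1 ≤ p ^ α := by have := hpa2 hp hα; omega
  have h2 : p ^ α ≤ p ^ α * p ^ α := Nat.le_mul_of_pos_left _ (by omega)
  have hd : b * p ^ α ∣ p ^ α * p ^ α - p ^ α := (Nat.modEq_iff_dvd' h2).mp hacm.symm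
  have heq : p ^ α * p ^ α - p ^ α = (p ^ α - 1) * p ^ α := by
    rw [Nat.sub_mul, one_mul, Nat.mul_comm]
  rw [heq] at hd
  have hb : b ∣ p ^ α - 1 :=
    (Nat.mul_dvd_mul_iff_right (show 0 < p ^ α by omega)).mp hd
  exact ((Nat.modEq_iff_dvd' h1).mpr hb).symm

lemma mem_iff : acmMem (p ^ α) (b * p ^ α) x ↔
    x = 1 ∨ ∃ m, 0 < m ∧ m ≡ 1 [MOD b] ∧ x = p ^ α * m := by
  constructor
  · rintro (rfl | ⟨k, rfl⟩)
    · exact Or.inl rfl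
    · refine Or.inr ⟨1 + k * b, by omega, ?_, by ring⟩
      simpa [Nat.ModEq] using Nat.add_mul_mod_self_right 1 k b
  · rintro (rfl | ⟨m, hm0, hm1, rfl⟩)
    · exact Or.inl rfl
    · have : b ∣ m - 1 := (Nat.modEq_iff_dvd' (by omega)).mp hm1.symm
      obtain ⟨k, hk⟩ := this
      have hm : m = 1 + k * b := by
        have : k * b = b * k := Nat.mul_comm _ _
        omega
      exact Or.inr ⟨k, by rw [hm]; ring⟩

lemma mem_mul (hp : p.Prime) (hb1 : p ^ α ≡ 1 [MOD b])
    (hx : acmMem (p ^ α) (b * p ^ α) x) (hy : acmMem (p ^ α) (b * p ^ α) y) :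
    acmMem (p ^ α) (b * p ^ α) (x * y) := by
  rw [mem_iff] at hx hy ⊢
  rcases hx with rfl | ⟨m, hm0, hm1, rfl⟩
  · simpa using hy
  rcases hy with rfl | ⟨n, hn0, hn1, rfl⟩
  · exact Or.inr ⟨m, hm0, hm1, by ring⟩
  · refine Or.inr ⟨p ^ α * m * n, by have := hp.pos; positivity, ?_, by ring⟩
    calc p ^ α * m * n ≡ 1 * 1 * 1 [MOD b] := (hb1.mul hm1).mul hn1
      _ = 1 := by ring

lemma atom_iff (hp : p.Prime) (hα : 1 < α) (hb1 : p ^ α ≡ 1 [MOD b]) :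
    acmAtom (p ^ α) (b * p ^ α) x ↔
      ∃ m, 0 < m ∧ m ≡ 1 [MOD b] ∧ ¬ p ^ α ∣ m ∧ x = p ^ α * m := by
  have hpa := hpa2 hp hα
  constructor
  · rintro ⟨hmem, hne, hirr⟩
    rcases mem_iff.mp hmem with rfl | ⟨m, hm0, hm1, rfl⟩
    · exact absurd rfl hne
    refine ⟨m, hm0, hm1, ?_, rfl⟩
    rintro ⟨m', rfl⟩
    have hm'0 : 0 < m' := by
      rcases Nat.eq_zero_or_pos m' with rfl | h
      · simp at hm0
      · exact h
    have hm'1 : m' ≡ 1 [MOD b] := by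
      have : p ^ α * m' ≡ 1 * m' [MOD b] := hb1.mul_right m'
      calc m' ≡ p ^ α * m' [MOD b] := by simpa using this.symm
        _ ≡ 1 [MOD b] := hm1
    have h1 : acmMem (p ^ α) (b * p ^ α) (p ^ α) :=
      mem_iff.mpr (Or.inr ⟨1, one_pos, by rfl, by ring⟩)
    have h2 : acmMem (p ^ α) (b * p ^ α) (p ^ α * m') :=
      mem_iff.mpr (Or.inr ⟨m', hm'0, hm'1, rfl⟩)
    rcases hirr _ _ h1 h2 (by ring) with h | h
    · omega
    · have : p ^ α * m' ≥ p ^ α := Nat.le_mul_of_pos_right _ hm'0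
      omega
  · rintro ⟨m, hm0, hm1, hnd, rfl⟩
    refine ⟨mem_iff.mpr (Or.inr ⟨m, hm0, hm1, rfl⟩), ?_, ?_⟩
    · have : p ^ α * m ≥ p ^ α := Nat.le_mul_of_pos_right _ hm0
      omega
    · intro y z hy hz hxyz
      by_contra hcon
      push_neg at hcon
      obtain ⟨hy1, hz1⟩ := hcon
      rcases mem_iff.mp hy with rfl | ⟨m₁, hm₁0, hm₁1, rfl⟩
      · exact hy1 rfl
      rcases mem_iff.mp hz with rfl | ⟨m₂, hm₂0, hm₂1, rfl⟩
      · exact hz1 rfl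
      apply hnd
      have hm : m = p ^ α * (m₁ * m₂) := by
        have hpa0 : 0 < p ^ α := by omega
        have := hxyz
        have h : p ^ α * m = p ^ α * (p ^ α * (m₁ * m₂)) := by
          rw [this]; ring
        exact Nat.eq_of_mul_eq_mul_left hpa0 h
      exact ⟨m₁ * m₂, by rw [hm]⟩

lemma atom_two_le (hp : p.Prime) (hα : 1 < α) (hb1 : p ^ α ≡ 1 [MOD b])
    (h : acmAtom (p ^ α) (b * p ^ α) x) : 2 ≤ x := by
  obtain ⟨m, hm0, _, _, rfl⟩ := (atom_iff hp hα hb1).mp h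
  have := hpa2 hp hα
  have : p ^ α ≤ p ^ α * m := Nat.le_mul_of_pos_right _ hm0
  omega


/-- uniqueness of p-adic decomposition -/
lemma pow_mul_inj (hp : p.Prime) {i j n m : ℕ} (hn : ¬ p ∣ n) (hm : ¬ p ∣ m)
    (h : p ^ i * n = p ^ j * m) : i = j ∧ n = m := by
  have hn0 : n ≠ 0 := by rintro rfl; exact hn (dvd_zero p)
  have hm0 : m ≠ 0 := by rintro rfl; exact hm (dvd_zero p)
  have hij : i = j := by
    have h1 : (p ^ i * n).factorization p = i := by
      rw [Nat.factorization_mul (pow_ne_zero _ hp.pos.ne') hn0]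
      simp [hp.factorization_pow, Nat.factorization_eq_zero_of_not_dvd hn]
    have h2 : (p ^ j * m).factorization p = j := by
      rw [Nat.factorization_mul (pow_ne_zero _ hp.pos.ne') hm0]
      simp [hp.factorization_pow, Nat.factorization_eq_zero_of_not_dvd hm]
    rw [h] at h1; omega
  subst hij
  exact ⟨rfl, Nat.eq_of_mul_eq_mul_left (pow_pos hp.pos _) h⟩



/-- order of p mod b -/
noncomputable def ordp (p b : ℕ) : ℕ := orderOf (p : ZMod b)

lemma modeq_pow_iff (k : ℕ) : p ^ k ≡ 1 [MOD b] ↔ ordp p b ∣ k := by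
  rw [ordp, orderOf_dvd_iff_pow_eq_one]
  have : ((p : ZMod b)) ^ k = ((p ^ k : ℕ) : ZMod b) := by push_cast; ring
  rw [this, show (1 : ZMod b) = ((1 : ℕ) : ZMod b) by push_cast; ring,
    ZMod.natCast_eq_natCast_iff]

lemma ordp_dvd_alpha {α : ℕ} (hb1 : p ^ α ≡ 1 [MOD b]) : ordp p b ∣ α :=
  (modeq_pow_iff α).mp hb1

lemma ordp_pos {α : ℕ} (hα : 1 < α) (hb1 : p ^ α ≡ 1 [MOD b]) : 0 < ordp p b := by
  rcases Nat.eq_zero_or_pos (ordp p b) with h | h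
  · have := ordp_dvd_alpha hb1; rw [h] at this; omega
  · exact h

/-- cancellation: two window exponents agree -/
lemma exp_unique {n i j : ℕ} (hi : p ^ i * n ≡ 1 [MOD b]) (hj : p ^ j * n ≡ 1 [MOD b])
    (hij : i ≤ j) : ordp p b ∣ j - i := by
  rw [ordp, orderOf_dvd_iff_pow_eq_one]
  have hi' : (p : ZMod b) ^ i * n = 1 := by
    have := (ZMod.natCast_eq_natCast_iff _ _ _).mpr hi; push_cast at this; exact this
  have hj' : (p : ZMod b) ^ j * n = 1 := by
    have := (ZMod.natCast_eq_natCast_iff _ _ _).mpr hj; push_cast at this; exact this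
  have hu : IsUnit ((p : ZMod b) ^ i * (n : ZMod b)) := by rw [hi']; exact isUnit_one
  have : (p : ZMod b) ^ (j - i) * ((p : ZMod b) ^ i * n) = 1 := by
    rw [← mul_assoc, ← pow_add]
    rw [show j - i + i = j from Nat.sub_add_cancel hij]
    exact hj'
  calc (p : ZMod b) ^ (j - i) = (p : ZMod b) ^ (j - i) * ((p:ZMod b) ^ i * n) := by
        rw [hi', mul_one]
    _ = 1 := this


lemma atom_decomp (hp : p.Prime) (hα : 1 < α) (hb1 : p ^ α ≡ 1 [MOD b])
    (hx : acmAtom (p ^ α) (b * p ^ α) x) :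
    ∃ i n, i < α ∧ ¬ p ∣ n ∧ p ^ i * n ≡ 1 [MOD b] ∧ x = p ^ (α + i) * n := by
  obtain ⟨m, hm0, hm1, hnd, rfl⟩ := (atom_iff hp hα hb1).mp hx
  refine ⟨m.factorization p, m / p ^ (m.factorization p), ?_, ?_, ?_, ?_⟩
  · by_contra h
    push_neg at h
    exact hnd (dvd_trans (pow_dvd_pow p h) (Nat.ordProj_dvd m p))
  · exact Nat.not_dvd_ordCompl hp hm0.ne'
  · rwa [Nat.ordProj_mul_ordCompl_eq_self m p]
  · rw [pow_add, mul_assoc, Nat.ordProj_mul_ordCompl_eq_self m p]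

lemma atom_of_decomp (hp : p.Prime) (hα : 1 < α) (hb1 : p ^ α ≡ 1 [MOD b])
    {i n : ℕ} (hi : i < α) (hn : ¬ p ∣ n) (hc : p ^ i * n ≡ 1 [MOD b]) :
    acmAtom (p ^ α) (b * p ^ α) (p ^ (α + i) * n) := by
  rw [atom_iff hp hα hb1]
  have hn0 : 0 < n := by
    rcases Nat.eq_zero_or_pos n with rfl | h
    · exact absurd (dvd_zero p) hn
    · exact h
  refine ⟨p ^ i * n, Nat.mul_pos (pow_pos hp.pos i) hn0, hc, ?_, by rw [pow_add, mul_assoc]⟩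
  rintro hdvd
  have h1 : p ^ i * p ^ (α - i) ∣ p ^ i * n := by
    rwa [← pow_add, show i + (α - i) = α by omega]
  have h2 : p ^ (α - i) ∣ n := (mul_dvd_mul_iff_left (pow_pos hp.pos i).ne').mp h1
  exact hn (dvd_trans (dvd_pow_self p (by omega : α - i ≠ 0)) h2)

lemma pure_atom (hp : p.Prime) (hα : 1 < α) (hb1 : p ^ α ≡ 1 [MOD b])
    {e : ℕ} (he : e < α) (hde : ordp p b ∣ e) :
    acmAtom (p ^ α) (b * p ^ α) (p ^ (α + e)) := by
  have := atom_of_decomp hp hα hb1 he (Nat.Prime.not_dvd_one hp)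
    (by rw [mul_one]; exact (modeq_pow_iff e).mpr hde)
  simpa using this

/-- The merge lemma: two atoms (given in decomposed form) refactor into a
"carrier" atom holding the product of the n-parts, with window exponent,
together with one or two pure-power atoms. -/
lemma merge (hp : p.Prime) (hα : 1 < α) (hb1 : p ^ α ≡ 1 [MOD b])
    {i₁ i₂ n₁ n₂ : ℕ} (hi₁ : i₁ < α) (hi₂ : i₂ < α)
    (hn₁ : ¬ p ∣ n₁) (hn₂ : ¬ p ∣ n₂)
    (hc₁ : p ^ i₁ * n₁ ≡ 1 [MOD b]) (hc₂ : p ^ i₂ * n₂ ≡ 1 [MOD b]) :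
    ∃ t : Multiset ℕ,
      (∀ u ∈ t, ∃ e', e' < α ∧ ordp p b ∣ e' ∧ u = p ^ (α + e')) ∧
      1 ≤ Multiset.card t ∧ Multiset.card t ≤ 2 ∧
      ((i₁ + i₂) % ordp p b < ordp p b ∧ ¬ p ∣ (n₁ * n₂) ∧
        p ^ ((i₁ + i₂) % ordp p b) * (n₁ * n₂) ≡ 1 [MOD b]) ∧
      (p ^ (α + (i₁ + i₂) % ordp p b) * (n₁ * n₂)) * t.prod
        = (p ^ (α + i₁) * n₁) * (p ^ (α + i₂) * n₂) := by
  set d := ordp p b with hd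
  have hdpos : 0 < d := ordp_pos hα hb1
  have hdα : d ∣ α := ordp_dvd_alpha hb1
  have hdle : d ≤ α := Nat.le_of_dvd (by omega) hdα
  set j := (i₁ + i₂) % d with hj
  have hjd : j < d := Nat.mod_lt _ hdpos
  have hjle : j ≤ i₁ + i₂ := Nat.mod_le _ _
  set e := i₁ + i₂ - j with he
  have hde : d ∣ e := by
    have h := Nat.mod_add_div (i₁ + i₂) d
    exact ⟨(i₁ + i₂) / d, by omega⟩
  have hje : j + e = i₁ + i₂ := by omega
  have heub : e ≤ 2 * α - 2 := by omega
  have hnn : ¬ p ∣ (n₁ * n₂) := fun h => by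
    rcases (Nat.Prime.dvd_mul hp).mp h with h | h
    · exact hn₁ h
    · exact hn₂ h
  have hcc : p ^ j * (n₁ * n₂) ≡ 1 [MOD b] := by
    have h1 : p ^ e ≡ 1 [MOD b] := (modeq_pow_iff e).mpr hde
    have h2 : p ^ j * (n₁ * n₂) * 1 ≡ p ^ j * (n₁ * n₂) * p ^ e [MOD b] :=
      Nat.ModEq.mul_left _ h1.symm
    have h3 : p ^ j * (n₁ * n₂) * p ^ e = (p ^ i₁ * n₁) * (p ^ i₂ * n₂) := by
      calc p ^ j * (n₁ * n₂) * p ^ e = p ^ (j + e) * (n₁ * n₂) := by rw [pow_add]; ring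
        _ = p ^ (i₁ + i₂) * (n₁ * n₂) := by rw [hje]
        _ = (p ^ i₁ * n₁) * (p ^ i₂ * n₂) := by rw [pow_add]; ring
    calc p ^ j * (n₁ * n₂) = p ^ j * (n₁ * n₂) * 1 := by ring
      _ ≡ (p ^ i₁ * n₁) * (p ^ i₂ * n₂) [MOD b] := by rw [← h3]; exact h2
      _ ≡ 1 * 1 [MOD b] := hc₁.mul hc₂
      _ = 1 := by ring
  by_cases hcase : e < α
  · refine ⟨{p ^ (α + e)}, ?_, by simp, by simp, ⟨hjd, hnn, hcc⟩, ?_⟩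
    · intro u hu
      rw [Multiset.mem_singleton] at hu
      exact ⟨e, hcase, hde, hu⟩
    · rw [Multiset.prod_singleton]
      have : (α + j) + (α + e) = (α + i₁) + (α + i₂) := by omega
      calc p ^ (α + j) * (n₁ * n₂) * p ^ (α + e)
          = p ^ ((α + j) + (α + e)) * (n₁ * n₂) := by rw [pow_add]; ring
        _ = p ^ ((α + i₁) + (α + i₂)) * (n₁ * n₂) := by rw [this]
        _ = (p ^ (α + i₁) * n₁) * (p ^ (α + i₂) * n₂) := by rw [pow_add]; ring
  · have he2 : e - α < α := by omega
    have hde2 : d ∣ e - α := Nat.dvd_sub hde hdα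
    refine ⟨(p ^ (α + (e - α)) ::ₘ {p ^ (α + 0)}), ?_, by simp, by simp, ⟨hjd, hnn, hcc⟩, ?_⟩
    · intro u hu
      rw [Multiset.mem_cons, Multiset.mem_singleton] at hu
      rcases hu with rfl | rfl
      · exact ⟨e - α, he2, hde2, rfl⟩
      · exact ⟨0, by omega, dvd_zero _, rfl⟩
    · rw [Multiset.prod_cons, Multiset.prod_singleton]
      have : (α + j) + ((α + (e - α)) + (α + 0)) = (α + i₁) + (α + i₂) := by omega
      calc p ^ (α + j) * (n₁ * n₂) * (p ^ (α + (e - α)) * p ^ (α + 0))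
          = p ^ ((α + j) + ((α + (e - α)) + (α + 0))) * (n₁ * n₂) := by
            rw [pow_add, pow_add]; ring
        _ = p ^ ((α + i₁) + (α + i₂)) * (n₁ * n₂) := by rw [this]
        _ = (p ^ (α + i₁) * n₁) * (p ^ (α + i₂) * n₂) := by rw [pow_add]; ring

/-- a single allowed step -/
def stepR (p b α x N : ℕ) (s t : Multiset ℕ) : Prop :=
  acmFactorization (p ^ α) (b * p ^ α) x s ∧ acmFactorization (p ^ α) (b * p ^ α) x t ∧
    facDist s t ≤ N

lemma facDist_comm (s t : Multiset ℕ) : facDist s t = facDist t s := max_comm _ _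

lemma stepR_symm {x N : ℕ} : Symmetric (stepR p b α x N) := by
  rintro s t ⟨h1, h2, h3⟩
  exact ⟨h2, h1, by rwa [facDist_comm]⟩

lemma facDist_le_decomp (c u u' : Multiset ℕ) :
    facDist (u + c) (u' + c) ≤ max (Multiset.card u) (Multiset.card u') := by
  unfold facDist
  rw [add_tsub_add_eq_tsub_right, add_tsub_add_eq_tsub_right]
  exact max_le_max (Multiset.card_le_card tsub_le_self) (Multiset.card_le_card tsub_le_self)

lemma facDist_cons (a : ℕ) (s t : Multiset ℕ) :
    facDist (a ::ₘ s) (a ::ₘ t) = facDist s t := by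
  unfold facDist
  rw [← Multiset.singleton_add, ← Multiset.singleton_add a t,
    add_tsub_add_eq_tsub_left, add_tsub_add_eq_tsub_left]

lemma rtg_nchain {x N z₁ z₂ : Multiset ℕ → Prop} : True := trivial

lemma rtg_to_nchain {x N : ℕ} {z₁ z₂ : Multiset ℕ}
    (h1 : acmFactorization (p ^ α) (b * p ^ α) x z₁)
    (h : Relation.ReflTransGen (stepR p b α x N) z₁ z₂) :
    acmNChain (p ^ α) (b * p ^ α) x N z₁ z₂ := by
  induction h with
  | refl => exact ⟨[z₁], by simp, rfl, rfl, by simpa using h1, List.isChain_singleton _⟩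
  | @tail m c hab hr ih =>
    obtain ⟨L, hne, hhd, hlast, hmem, hch⟩ := ih
    refine ⟨L ++ [c], by simp, ?_, ?_, ?_, ?_⟩
    · cases L with
      | nil => exact absurd rfl hne
      | cons a L' => simpa using hhd
    · simp [List.getLast?_concat]
    · intro z hz
      rcases List.mem_append.mp hz with hz | hz
      · exact hmem z hz
      · rw [List.mem_singleton.mp hz]
        exact hr.2.1
    · refine List.isChain_append.mpr ?_
      refine ⟨hch, by simp, ?_⟩
      intro s hs y hy
      simp only [List.head?_cons, Option.mem_def, Option.some.injEq] at hy
      rw [hlast] at hs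
      simp only [Option.mem_def, Option.some.injEq] at hs
      subst hs; subst hy
      exact hr.2.2

lemma rtg_symm {x N : ℕ} {s t : Multiset ℕ}
    (h : Relation.ReflTransGen (stepR p b α x N) s t) :
    Relation.ReflTransGen (stepR p b α x N) t s :=
  (@Relation.ReflTransGen.stdSymm _ _ ⟨fun _ _ h' => @stepR_symm p b α x N _ _ h'⟩).symm _ _ h

lemma rtg_lift {x' N a x : ℕ} {s t : Multiset ℕ}
    (ha : acmAtom (p ^ α) (b * p ^ α) a) (hax : a * x' = x)
    (h : Relation.ReflTransGen (stepR p b α x' N) s t) :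
    Relation.ReflTransGen (stepR p b α x N) (a ::ₘ s) (a ::ₘ t) := by
  refine Relation.ReflTransGen.lift (fun s => a ::ₘ s) ?_ _ _ h
  rintro u v ⟨⟨hu1, hu2⟩, ⟨hv1, hv2⟩, hd⟩
  refine ⟨⟨?_, by rw [Multiset.prod_cons, hu2, hax]⟩,
    ⟨?_, by rw [Multiset.prod_cons, hv2, hax]⟩, by rwa [facDist_cons]⟩
  · intro w hw
    rcases Multiset.mem_cons.mp hw with rfl | hw
    · exact ha
    · exact hu1 w hw
  · intro w hw
    rcases Multiset.mem_cons.mp hw with rfl | hw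
    · exact ha
    · exact hv1 w hw

lemma ord_decomp (hp : p.Prime) {k n : ℕ} (hn : ¬ p ∣ n) :
    (p ^ k * n).factorization p = k ∧ (p ^ k * n) / p ^ ((p ^ k * n).factorization p) = n := by
  have hn0 : n ≠ 0 := by rintro rfl; exact hn (dvd_zero p)
  have h1 : (p ^ k * n).factorization p = k := by
    rw [Nat.factorization_mul (pow_ne_zero _ hp.pos.ne') hn0]
    simp [hp.factorization_pow, Nat.factorization_eq_zero_of_not_dvd hn]
  exact ⟨h1, by rw [h1, Nat.mul_div_cancel_left n (pow_pos hp.pos k)]⟩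

lemma atom_pure_decomp (hp : p.Prime) (hα : 1 < α) (hb1 : p ^ α ≡ 1 [MOD b])
    {u : ℕ} (hu : acmAtom (p ^ α) (b * p ^ α) u) (hpure : u / p ^ u.factorization p = 1) :
    ∃ e, e < α ∧ ordp p b ∣ e ∧ u = p ^ (α + e) * 1 := by
  obtain ⟨i, n, hi, hn, hc, rfl⟩ := atom_decomp hp hα hb1 hu
  obtain ⟨h1, h2⟩ := ord_decomp hp (k := α + i) hn
  rw [h1] at hpure h2
  have hn1 : n = 1 := h2.symm.trans hpure
  subst hn1
  rw [mul_one] at hc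
  exact ⟨i, hi, (modeq_pow_iff i).mp hc, rfl⟩

lemma pure_prod (hp : p.Prime) (hα : 1 < α) (hb1 : p ^ α ≡ 1 [MOD b])
    {c : Multiset ℕ}
    (hc : ∀ u ∈ c, acmAtom (p ^ α) (b * p ^ α) u ∧ u / p ^ u.factorization p = 1) :
    ∃ K, ordp p b ∣ K ∧ c.prod = p ^ K := by
  induction c using Multiset.induction_on with
  | empty => exact ⟨0, dvd_zero _, by simp⟩
  | cons u c ih =>
    obtain ⟨K, hK, hprod⟩ := ih (fun v hv => hc v (Multiset.mem_cons_of_mem hv))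
    obtain ⟨hu, hupure⟩ := hc u (Multiset.mem_cons_self u c)
    obtain ⟨e, he, hde, rfl⟩ := atom_pure_decomp hp hα hb1 hu hupure
    refine ⟨(α + e) + K, ?_, ?_⟩
    · exact dvd_add (dvd_add (ordp_dvd_alpha hb1) hde) hK
    · rw [Multiset.prod_cons, hprod, mul_one, ← pow_add]

/-- the canonical "carrier" atom of x -/
noncomputable def Ax (p b α x : ℕ) : ℕ :=
  p ^ (α + (x.factorization p - α) % ordp p b) * (x / p ^ x.factorization p)

lemma reach (hp : p.Prime) (hα : 1 < α) (hb1 : p ^ α ≡ 1 [MOD b]) {x : ℕ} :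
    ∀ z, acmFactorization (p ^ α) (b * p ^ α) x z → 2 ≤ Multiset.card z →
    ∃ w, acmFactorization (p ^ α) (b * p ^ α) x w ∧ Ax p b α x ∈ w ∧
      Relation.ReflTransGen (stepR p b α x 3) z w := by
  have hdpos : 0 < ordp p b := ordp_pos hα hb1
  have hdα : ordp p b ∣ α := ordp_dvd_alpha hb1
  have hdle : ordp p b ≤ α := Nat.le_of_dvd (by omega) hdα
  set d := ordp p b with hdd
  set P : ℕ → Prop := fun u => ¬ (u / p ^ u.factorization p = 1) with hP
  suffices main : ∀ k z, Multiset.card (Multiset.filter P z) = k →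
      acmFactorization (p ^ α) (b * p ^ α) x z → 2 ≤ Multiset.card z →
      ∃ w, acmFactorization (p ^ α) (b * p ^ α) x w ∧ Ax p b α x ∈ w ∧
        Relation.ReflTransGen (stepR p b α x 3) z w by
    exact fun z hz h2 => main _ z rfl hz h2
  intro k
  induction k using Nat.strong_induction_on with
  | _ k IH =>
  intro z hk hz h2
  rcases Nat.lt_or_ge k 2 with hk2 | hk2
  · -- k = 0 or 1 : at most one non-pure atom
    rcases Nat.lt_or_ge k 1 with hk1 | hk1
    · -- k = 0 : all atoms pure
      have hkz : k = 0 := by omega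
      subst hkz
      have hallpure : ∀ u ∈ z, u / p ^ u.factorization p = 1 := by
        intro u hu
        by_contra hcon
        have : u ∈ Multiset.filter P z := Multiset.mem_filter.mpr ⟨hu, hcon⟩
        have := Multiset.card_pos_iff_exists_mem.mpr ⟨u, this⟩
        omega
      -- z = u₁ ::ₘ u₂ ::ₘ c
      obtain ⟨u₁, hu₁⟩ := Multiset.card_pos_iff_exists_mem.mp
        (show 0 < Multiset.card z by omega)
      obtain ⟨z', rfl⟩ := Multiset.exists_cons_of_mem hu₁
      have h2' : 0 < Multiset.card z' := by
        rw [Multiset.card_cons] at h2; omega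
      obtain ⟨u₂, hu₂⟩ := Multiset.card_pos_iff_exists_mem.mp h2'
      obtain ⟨c, rfl⟩ := Multiset.exists_cons_of_mem hu₂
      have hat₁ := hz.1 u₁ (Multiset.mem_cons_self _ _)
      have hat₂ := hz.1 u₂ (Multiset.mem_cons_of_mem (Multiset.mem_cons_self _ _))
      obtain ⟨e₁, he₁, hde₁, rfl⟩ := atom_pure_decomp hp hα hb1 hat₁
        (hallpure _ (Multiset.mem_cons_self _ _))
      obtain ⟨e₂, he₂, hde₂, rfl⟩ := atom_pure_decomp hp hα hb1 hat₂
        (hallpure _ (Multiset.mem_cons_of_mem (Multiset.mem_cons_self _ _)))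
      have hone : ¬ p ∣ 1 := Nat.Prime.not_dvd_one hp
      have hc₁ : p ^ e₁ * 1 ≡ 1 [MOD b] := by
        rw [mul_one]; exact (modeq_pow_iff e₁).mpr hde₁
      have hc₂ : p ^ e₂ * 1 ≡ 1 [MOD b] := by
        rw [mul_one]; exact (modeq_pow_iff e₂).mpr hde₂
      obtain ⟨t, htpure, ht1, ht2, ⟨hjd, hnn, hcc⟩, heq⟩ :=
        merge hp hα hb1 he₁ he₂ hone hone hc₁ hc₂
      set A := p ^ (α + (e₁ + e₂) % d) * (1 * 1) with hA
      have hAatom : acmAtom (p ^ α) (b * p ^ α) A :=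
        atom_of_decomp hp hα hb1 (lt_of_lt_of_le hjd hdle) hnn hcc
      -- identify A with Ax
      have hAx : Ax p b α x = A := by
        have hall : ∀ u ∈ (p ^ (α + e₁) * 1) ::ₘ (p ^ (α + e₂) * 1) ::ₘ c,
            acmAtom (p ^ α) (b * p ^ α) u ∧ u / p ^ u.factorization p = 1 :=
          fun u hu => ⟨hz.1 u hu, hallpure u hu⟩
        obtain ⟨K, hdK, hKprod⟩ := pure_prod hp hα hb1 hall
        have hxK : x = p ^ K * 1 := by
          rw [← hz.2, hKprod, mul_one]
        have hKα : α ≤ K := by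
          have : p ^ (α + e₁) * 1 ∣ ((p ^ (α + e₁) * 1) ::ₘ (p ^ (α + e₂) * 1) ::ₘ c).prod :=
            Multiset.dvd_prod (Multiset.mem_cons_self _ _)
          rw [hKprod, mul_one] at this
          have := (Nat.pow_dvd_pow_iff_le_right hp.one_lt).mp this
          omega
        have hord := ord_decomp hp (k := K) (n := 1) hone
        rw [hxK, Ax, hord.1, mul_one, Nat.div_self (pow_pos hp.pos K)]
        have hmod : (K - α) % d = (e₁ + e₂) % d := by
          have hd1 : d ∣ K - α := Nat.dvd_sub hdK hdα
          obtain ⟨k₁, hk₁⟩ := hd1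
          obtain ⟨k₂, hk₂⟩ := hde₁
          obtain ⟨k₃, hk₃⟩ := hde₂
          rw [hk₁, hk₂, hk₃, ← Nat.mul_add, Nat.mul_mod_right, Nat.mul_mod_right]
        rw [hmod, hA]
      set z2 := A ::ₘ (t + c) with hz2
      have hfac2 : acmFactorization (p ^ α) (b * p ^ α) x z2 := by
        constructor
        · intro u hu
          rcases Multiset.mem_cons.mp hu with rfl | hu
          · exact hAatom
          rcases Multiset.mem_add.mp hu with hu | hu
          · obtain ⟨e', he', hde', rfl⟩ := htpure u hu
            exact pure_atom hp hα hb1 he' hde'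
          · exact hz.1 u (Multiset.mem_cons_of_mem (Multiset.mem_cons_of_mem hu))
        · rw [Multiset.prod_cons, Multiset.prod_add, ← mul_assoc, heq, mul_assoc,
            ← Multiset.prod_cons, ← Multiset.prod_cons]
          exact hz.2
      refine ⟨z2, hfac2, by rw [hAx]; exact Multiset.mem_cons_self _ _, ?_⟩
      refine Relation.ReflTransGen.single ⟨hz, hfac2, ?_⟩
      have hzd : (p ^ (α + e₁) * 1) ::ₘ (p ^ (α + e₂) * 1) ::ₘ c
          = ((p ^ (α + e₁) * 1) ::ₘ {p ^ (α + e₂) * 1}) + c := by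
        rw [Multiset.cons_add, Multiset.singleton_add]
      have hz2d : z2 = (A ::ₘ t) + c := by
        rw [hz2, Multiset.cons_add]
      rw [hzd, hz2d]
      refine le_trans (facDist_le_decomp c _ _) ?_
      simp only [Multiset.card_cons, Multiset.card_singleton]
      omega
    · -- k = 1 : exactly one non-pure atom
      have hkz : k = 1 := by omega
      subst hkz
      obtain ⟨y, hyf⟩ := Multiset.card_pos_iff_exists_mem.mp
        (show 0 < Multiset.card (Multiset.filter P z) by omega)
      obtain ⟨hyz, hPy⟩ := Multiset.mem_filter.mp hyf
      obtain ⟨c, rfl⟩ := Multiset.exists_cons_of_mem hyz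
      have hfe : Multiset.filter P (y ::ₘ c) = y ::ₘ Multiset.filter P c :=
        Multiset.filter_cons_of_pos _ hPy
      have hfc : ∀ u ∈ c, u / p ^ u.factorization p = 1 := by
        intro u hu
        by_contra hcon
        have h1 : u ∈ Multiset.filter P c := Multiset.mem_filter.mpr ⟨hu, hcon⟩
        have h2' : Multiset.card (Multiset.filter P c) = 0 := by
          rw [hfe, Multiset.card_cons] at hk; omega
        rw [Multiset.card_eq_zero] at h2'
        rw [h2'] at h1
        exact absurd h1 (Multiset.notMem_zero u)
      have hcpos : 0 < Multiset.card c := by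
        rw [Multiset.card_cons] at h2; omega
      obtain ⟨P₀, hP₀⟩ := Multiset.card_pos_iff_exists_mem.mp hcpos
      obtain ⟨c', rfl⟩ := Multiset.exists_cons_of_mem hP₀
      have haty := hz.1 y (Multiset.mem_cons_self _ _)
      have hatP := hz.1 P₀ (Multiset.mem_cons_of_mem (Multiset.mem_cons_self _ _))
      obtain ⟨i, n, hi, hn, hcn, rfl⟩ := atom_decomp hp hα hb1 haty
      obtain ⟨e₀, he₀, hde₀, rfl⟩ := atom_pure_decomp hp hα hb1 hatP
        (hfc _ (Multiset.mem_cons_self _ _))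
      have hone : ¬ p ∣ 1 := Nat.Prime.not_dvd_one hp
      have hcP : p ^ e₀ * 1 ≡ 1 [MOD b] := by
        rw [mul_one]; exact (modeq_pow_iff e₀).mpr hde₀
      obtain ⟨t, htpure, ht1, ht2, ⟨hjd, hnn, hcc⟩, heq⟩ :=
        merge hp hα hb1 hi he₀ hn hone hcn hcP
      set A := p ^ (α + (i + e₀) % d) * (n * 1) with hA
      have hAatom : acmAtom (p ^ α) (b * p ^ α) A :=
        atom_of_decomp hp hα hb1 (lt_of_lt_of_le hjd hdle) hnn hcc
      have hAx : Ax p b α x = A := by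
        have hall : ∀ u ∈ (p ^ (α + e₀) * 1) ::ₘ c',
            acmAtom (p ^ α) (b * p ^ α) u ∧ u / p ^ u.factorization p = 1 := by
          intro u hu
          exact ⟨hz.1 u (Multiset.mem_cons_of_mem hu), hfc u hu⟩
        obtain ⟨K, hdK, hKprod⟩ := pure_prod hp hα hb1 hall
        have hxK : x = p ^ (α + i + K) * n := by
          rw [← hz.2, Multiset.prod_cons, hKprod]
          rw [pow_add]; ring
        obtain ⟨hord1, hord2⟩ := ord_decomp hp (k := α + i + K) hn
        rw [hord1] at hord2
        rw [hxK, Ax, hord1, hord2]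
        have hsub : α + i + K - α = i + K := by omega
        have hmod : (i + K) % d = (i + e₀) % d := by
          obtain ⟨k₁, hk₁⟩ := hdK
          obtain ⟨k₂, hk₂⟩ := hde₀
          rw [hk₁, hk₂, Nat.add_mul_mod_self_left, Nat.add_mul_mod_self_left]
        rw [hsub, hmod, hA, mul_one]
      set z2 := A ::ₘ (t + c') with hz2
      have hfac2 : acmFactorization (p ^ α) (b * p ^ α) x z2 := by
        constructor
        · intro u hu
          rcases Multiset.mem_cons.mp hu with rfl | hu
          · exact hAatom
          rcases Multiset.mem_add.mp hu with hu | hu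
          · obtain ⟨e', he', hde', rfl⟩ := htpure u hu
            exact pure_atom hp hα hb1 he' hde'
          · exact hz.1 u (Multiset.mem_cons_of_mem (Multiset.mem_cons_of_mem hu))
        · rw [Multiset.prod_cons, Multiset.prod_add, ← mul_assoc, heq, mul_assoc,
            ← Multiset.prod_cons, ← Multiset.prod_cons]
          exact hz.2
      refine ⟨z2, hfac2, by rw [hAx]; exact Multiset.mem_cons_self _ _, ?_⟩
      refine Relation.ReflTransGen.single ⟨hz, hfac2, ?_⟩
      have hzd : (p ^ (α + i) * n) ::ₘ (p ^ (α + e₀) * 1) ::ₘ c'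
          = ((p ^ (α + i) * n) ::ₘ {p ^ (α + e₀) * 1}) + c' := by
        rw [Multiset.cons_add, Multiset.singleton_add]
      have hz2d : z2 = (A ::ₘ t) + c' := by
        rw [hz2, Multiset.cons_add]
      rw [hzd, hz2d]
      refine le_trans (facDist_le_decomp c' _ _) ?_
      simp only [Multiset.card_cons, Multiset.card_singleton]
      omega
  · -- k ≥ 2 : merge two non-pure atoms, recurse
    obtain ⟨y₁, hy₁f⟩ := Multiset.card_pos_iff_exists_mem.mp
      (show 0 < Multiset.card (Multiset.filter P z) by omega)
    obtain ⟨hy₁z, hPy₁⟩ := Multiset.mem_filter.mp hy₁f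
    obtain ⟨z', rfl⟩ := Multiset.exists_cons_of_mem hy₁z
    have hfe : Multiset.filter P (y₁ ::ₘ z') = y₁ ::ₘ Multiset.filter P z' :=
      Multiset.filter_cons_of_pos _ hPy₁
    have hkz' : Multiset.card (Multiset.filter P z') = k - 1 := by
      rw [hfe, Multiset.card_cons] at hk; omega
    obtain ⟨y₂, hy₂f⟩ := Multiset.card_pos_iff_exists_mem.mp
      (show 0 < Multiset.card (Multiset.filter P z') by omega)
    obtain ⟨hy₂z, hPy₂⟩ := Multiset.mem_filter.mp hy₂f
    obtain ⟨c, rfl⟩ := Multiset.exists_cons_of_mem hy₂z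
    have hat₁ := hz.1 y₁ (Multiset.mem_cons_self _ _)
    have hat₂ := hz.1 y₂ (Multiset.mem_cons_of_mem (Multiset.mem_cons_self _ _))
    obtain ⟨i₁, n₁, hi₁, hn₁, hc₁, rfl⟩ := atom_decomp hp hα hb1 hat₁
    obtain ⟨i₂, n₂, hi₂, hn₂, hc₂, rfl⟩ := atom_decomp hp hα hb1 hat₂
    have hnt₁ : n₁ ≠ 1 := by
      intro hh
      apply hPy₁
      have := ord_decomp hp (k := α + i₁) hn₁
      rw [this.2, hh]
    have hnt₂ : n₂ ≠ 1 := by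
      intro hh
      apply hPy₂
      have := ord_decomp hp (k := α + i₂) hn₂
      rw [this.2, hh]
    obtain ⟨t, htpure, ht1, ht2, ⟨hjd, hnn, hcc⟩, heq⟩ :=
      merge hp hα hb1 hi₁ hi₂ hn₁ hn₂ hc₁ hc₂
    set A := p ^ (α + (i₁ + i₂) % d) * (n₁ * n₂) with hA
    have hAatom : acmAtom (p ^ α) (b * p ^ α) A :=
      atom_of_decomp hp hα hb1 (lt_of_lt_of_le hjd hdle) hnn hcc
    set z2 := A ::ₘ (t + c) with hz2
    have hfac2 : acmFactorization (p ^ α) (b * p ^ α) x z2 := by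
      constructor
      · intro u hu
        rcases Multiset.mem_cons.mp hu with rfl | hu
        · exact hAatom
        rcases Multiset.mem_add.mp hu with hu | hu
        · obtain ⟨e', he', hde', rfl⟩ := htpure u hu
          exact pure_atom hp hα hb1 he' hde'
        · exact hz.1 u (Multiset.mem_cons_of_mem (Multiset.mem_cons_of_mem hu))
      · rw [Multiset.prod_cons, Multiset.prod_add, ← mul_assoc, heq, mul_assoc,
          ← Multiset.prod_cons, ← Multiset.prod_cons]
        exact hz.2
    -- new filter count is k - 1
    have hkz2 : Multiset.card (Multiset.filter P z2) = k - 1 := by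
      have hPA : P A := by
        rw [hP]
        simp only
        rw [hA]
        obtain ⟨h1', h2'⟩ := ord_decomp hp (k := α + (i₁ + i₂) % d) hnn
        rw [h1'] at h2'
        rw [h1', h2']
        intro hcon
        exact hnt₁ (Nat.dvd_one.mp ⟨n₂, hcon.symm⟩)
      have hft : Multiset.filter P t = 0 := by
        rw [Multiset.filter_eq_nil]
        intro u hu
        obtain ⟨e', he', hde', rfl⟩ := htpure u hu
        rw [hP]
        simp only [not_not]
        have h3' := ord_decomp hp (k := α + e') (n := 1) (Nat.Prime.not_dvd_one hp)
        rw [mul_one] at h3'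
        exact h3'.2
      have hfc2 : Multiset.card (Multiset.filter P c) = k - 2 := by
        have hfe₂ : Multiset.filter P ((p ^ (α + i₂) * n₂) ::ₘ c)
            = (p ^ (α + i₂) * n₂) ::ₘ Multiset.filter P c :=
          Multiset.filter_cons_of_pos _ hPy₂
        rw [hfe₂, Multiset.card_cons] at hkz'
        omega
      rw [hz2, Multiset.filter_cons_of_pos _ hPA, Multiset.card_cons,
        Multiset.filter_add, hft, Multiset.card_add, hfc2]
      simp
      omega
    have hcard2 : 2 ≤ Multiset.card z2 := by
      rw [hz2, Multiset.card_cons, Multiset.card_add]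
      omega
    obtain ⟨w, hw1, hw2, hw3⟩ := IH (k - 1) (by omega) z2 hkz2 hfac2 hcard2
    refine ⟨w, hw1, hw2, ?_⟩
    refine Relation.ReflTransGen.trans (Relation.ReflTransGen.single ⟨hz, hfac2, ?_⟩) hw3
    have hzd : (p ^ (α + i₁) * n₁) ::ₘ (p ^ (α + i₂) * n₂) ::ₘ c
        = ((p ^ (α + i₁) * n₁) ::ₘ {p ^ (α + i₂) * n₂}) + c := by
      rw [Multiset.cons_add, Multiset.singleton_add]
    have hz2d : z2 = (A ::ₘ t) + c := by
      rw [hz2, Multiset.cons_add]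
    rw [hzd, hz2d]
    refine le_trans (facDist_le_decomp c _ _) ?_
    simp only [Multiset.card_cons, Multiset.card_singleton]
    omega

lemma atom_pos (hp : p.Prime) (hα : 1 < α) (hb1 : p ^ α ≡ 1 [MOD b]) {u : ℕ}
    (h : acmAtom (p ^ α) (b * p ^ α) u) : 0 < u := by
  have := atom_two_le hp hα hb1 h; omega

lemma fac_card_le_one_of_atom (hp : p.Prime) (hα : 1 < α) (hb1 : p ^ α ≡ 1 [MOD b])
    {x : ℕ} {z : Multiset ℕ} (hx : acmAtom (p ^ α) (b * p ^ α) x)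
    (hz : acmFactorization (p ^ α) (b * p ^ α) x z) : Multiset.card z ≤ 1 := by
  by_contra hcon
  push_neg at hcon
  obtain ⟨u₁, hu₁⟩ := Multiset.card_pos_iff_exists_mem.mp
    (show 0 < Multiset.card z by omega)
  obtain ⟨z', rfl⟩ := Multiset.exists_cons_of_mem hu₁
  obtain ⟨u₂, hu₂⟩ := Multiset.card_pos_iff_exists_mem.mp
    (show 0 < Multiset.card z' by rw [Multiset.card_cons] at hcon; omega)
  obtain ⟨c, rfl⟩ := Multiset.exists_cons_of_mem hu₂
  obtain ⟨m, hm0, hm1, hnd, hxm⟩ := (atom_iff hp hα hb1).mp hx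
  obtain ⟨m₁, hm₁0, hm₁1, hnd₁, hu₁m⟩ := (atom_iff hp hα hb1).mp
    (hz.1 u₁ (Multiset.mem_cons_self _ _))
  obtain ⟨m₂, hm₂0, hm₂1, hnd₂, hu₂m⟩ := (atom_iff hp hα hb1).mp
    (hz.1 u₂ (Multiset.mem_cons_of_mem (Multiset.mem_cons_self _ _)))
  have hprod := hz.2
  rw [Multiset.prod_cons, Multiset.prod_cons, hu₁m, hu₂m, hxm] at hprod
  have hkey : m = p ^ α * (m₁ * m₂ * c.prod) := by
    apply Nat.eq_of_mul_eq_mul_left (show 0 < p ^ α from pow_pos hp.pos α)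
    rw [← hprod]; ring
  exact hnd ⟨m₁ * m₂ * c.prod, hkey⟩

lemma connect (hp : p.Prime) (hα : 1 < α) (hb1 : p ^ α ≡ 1 [MOD b]) :
    ∀ x z₁ z₂, acmFactorization (p ^ α) (b * p ^ α) x z₁ →
      acmFactorization (p ^ α) (b * p ^ α) x z₂ →
      Relation.ReflTransGen (stepR p b α x 3) z₁ z₂ := by
  intro x
  induction x using Nat.strong_induction_on with
  | _ x IH =>
  have key : ∀ z₁ z₂, acmFactorization (p ^ α) (b * p ^ α) x z₁ →
      acmFactorization (p ^ α) (b * p ^ α) x z₂ → (∃ a, a ∈ z₁ ∧ a ∈ z₂) →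
      Relation.ReflTransGen (stepR p b α x 3) z₁ z₂ := by
    rintro z₁ z₂ h₁ h₂ ⟨a, ha₁, ha₂⟩
    obtain ⟨s₁, rfl⟩ := Multiset.exists_cons_of_mem ha₁
    obtain ⟨s₂, rfl⟩ := Multiset.exists_cons_of_mem ha₂
    have hatom := h₁.1 a (Multiset.mem_cons_self _ _)
    have ha2 : 2 ≤ a := atom_two_le hp hα hb1 hatom
    have hfacs₁ : acmFactorization (p ^ α) (b * p ^ α) s₁.prod s₁ :=
      ⟨fun u hu => h₁.1 u (Multiset.mem_cons_of_mem hu), rfl⟩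
    have hprod : a * s₁.prod = x := by rw [← h₁.2, Multiset.prod_cons]
    have hs₂ : s₂.prod = s₁.prod := by
      apply Nat.eq_of_mul_eq_mul_left (show 0 < a by omega)
      rw [hprod, ← h₂.2, Multiset.prod_cons]
    have hfacs₂ : acmFactorization (p ^ α) (b * p ^ α) s₁.prod s₂ :=
      ⟨fun u hu => h₂.1 u (Multiset.mem_cons_of_mem hu), hs₂⟩
    have hx'pos : 0 < s₁.prod :=
      Multiset.prod_pos fun u hu => atom_pos hp hα hb1 (hfacs₁.1 u hu)
    have hlt : s₁.prod < x := by
      calc s₁.prod < 2 * s₁.prod := by omega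
        _ ≤ a * s₁.prod := Nat.mul_le_mul_right _ ha2
        _ = x := hprod
    exact rtg_lift hatom hprod (IH s₁.prod hlt s₁ s₂ hfacs₁ hfacs₂)
  intro z₁ z₂ h₁ h₂
  by_cases hsh : ∃ a, a ∈ z₁ ∧ a ∈ z₂
  · exact key z₁ z₂ h₁ h₂ hsh
  rcases Nat.lt_or_ge (Multiset.card z₁) 2 with hc₁ | hc₁
  · rcases Nat.lt_or_ge (Multiset.card z₁) 1 with hc₁' | hc₁'
    · -- z₁ = 0, x = 1
      have hz₁0 : z₁ = 0 := by
        rw [← Multiset.card_eq_zero]; omega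
      subst hz₁0
      have hx1 : x = 1 := by rw [← h₁.2]; simp
      have hz₂0 : z₂ = 0 := by
        by_contra hcon
        obtain ⟨u, hu⟩ := Multiset.exists_mem_of_ne_zero hcon
        have h2u : 2 ≤ u := atom_two_le hp hα hb1 (h₂.1 u hu)
        have : u ∣ x := h₂.2 ▸ Multiset.dvd_prod hu
        rw [hx1] at this
        have := Nat.le_of_dvd one_pos this
        omega
      rw [hz₂0]
    · -- card z₁ = 1 : x is an atom, so z₂ = {x} : shared, contradiction
      obtain ⟨y, rfl⟩ := Multiset.card_eq_one.mp (show Multiset.card z₁ = 1 by omega)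
      have hyx : y = x := by simpa using h₁.2
      subst hyx
      have hxatom : acmAtom (p ^ α) (b * p ^ α) y := h₁.1 y (by simp)
      have hc₂' := fac_card_le_one_of_atom hp hα hb1 hxatom h₂
      have hx2 : 2 ≤ y := atom_two_le hp hα hb1 hxatom
      rcases Nat.lt_or_ge (Multiset.card z₂) 1 with hc₂'' | hc₂''
      · have hz₂0 : z₂ = 0 := by rw [← Multiset.card_eq_zero]; omega
        subst hz₂0
        have : (0 : Multiset ℕ).prod = y := h₂.2
        simp at this; omega
      · obtain ⟨y', rfl⟩ := Multiset.card_eq_one.mp (show Multiset.card z₂ = 1 by omega)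
        have hy'x : y' = y := by simpa using h₂.2
        subst hy'x
        exact absurd ⟨y', by simp, by simp⟩ hsh
  rcases Nat.lt_or_ge (Multiset.card z₂) 2 with hc₂ | hc₂
  · -- symmetric small case for z₂
    rcases Nat.lt_or_ge (Multiset.card z₂) 1 with hc₂' | hc₂'
    · have hz₂0 : z₂ = 0 := by rw [← Multiset.card_eq_zero]; omega
      subst hz₂0
      have hx1 : x = 1 := by rw [← h₂.2]; simp
      obtain ⟨u, hu⟩ := Multiset.card_pos_iff_exists_mem.mp
        (show 0 < Multiset.card z₁ by omega)
      have h2u : 2 ≤ u := atom_two_le hp hα hb1 (h₁.1 u hu)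
      have : u ∣ x := h₁.2 ▸ Multiset.dvd_prod hu
      rw [hx1] at this
      have := Nat.le_of_dvd one_pos this
      omega
    · obtain ⟨y, rfl⟩ := Multiset.card_eq_one.mp (show Multiset.card z₂ = 1 by omega)
      have hyx : y = x := by simpa using h₂.2
      subst hyx
      have hxatom : acmAtom (p ^ α) (b * p ^ α) y := h₂.1 y (by simp)
      have := fac_card_le_one_of_atom hp hα hb1 hxatom h₁
      omega
  · -- both factorizations have length ≥ 2
    obtain ⟨w₁, hw₁f, hw₁A, hr₁⟩ := reach hp hα hb1 z₁ h₁ hc₁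
    obtain ⟨w₂, hw₂f, hw₂A, hr₂⟩ := reach hp hα hb1 z₂ h₂ hc₂
    exact (hr₁.trans (key w₁ w₂ hw₁f hw₂f ⟨Ax p b α x, hw₁A, hw₂A⟩)).trans (rtg_symm hr₂)

lemma three_mem (hp : p.Prime) (hα : 1 < α) (hb1 : p ^ α ≡ 1 [MOD b]) :
    3 ∈ acmCatSet (p ^ α) (b * p ^ α) := by
  intro x _ z₁ z₂ h₁ h₂
  exact rtg_to_nchain h₁ (connect hp hα hb1 x z₁ z₂ h₁ h₂)

lemma prods_eq_aux (hp : p.Prime) (hα : 1 < α) (hb1 : p ^ α ≡ 1 [MOD b])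
    {u u' : Multiset ℕ} (hu : ∀ v ∈ u, acmAtom (p ^ α) (b * p ^ α) v)
    (hu' : ∀ v ∈ u', acmAtom (p ^ α) (b * p ^ α) v)
    (hprod : u.prod = u'.prod) (hcard : Multiset.card u < Multiset.card u') :
    3 ≤ Multiset.card u' := by
  by_contra hcon
  push_neg at hcon
  have hcu : Multiset.card u ≤ 1 := by omega
  rcases Nat.lt_or_ge (Multiset.card u) 1 with h0 | h1
  · -- u = 0
    have hu0 : u = 0 := by rw [← Multiset.card_eq_zero]; omega
    subst hu0
    obtain ⟨v, hv⟩ := Multiset.card_pos_iff_exists_mem.mp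
      (show 0 < Multiset.card u' by omega)
    have h2v : 2 ≤ v := atom_two_le hp hα hb1 (hu' v hv)
    have : v ∣ u'.prod := Multiset.dvd_prod hv
    rw [← hprod] at this
    simp at this
    omega
  · -- card u = 1, card u' = 2
    obtain ⟨a0, rfl⟩ := Multiset.card_eq_one.mp (show Multiset.card u = 1 by omega)
    obtain ⟨c₁, c₂, rfl⟩ := Multiset.card_eq_two.mp
      (show Multiset.card u' = 2 by omega)
    have ha := hu a0 (by simp)
    have hc₁ := hu' c₁ (by simp)
    have hc₂ := hu' c₂ (by simp)
    rw [Multiset.prod_singleton] at hprod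
    have hsplit : a0 = c₁ * c₂ := by
      rw [hprod]
      rw [Multiset.insert_eq_cons, Multiset.prod_cons, Multiset.prod_singleton]
    rcases ha.2.2 c₁ c₂ hc₁.1 hc₂.1 hsplit with h | h
    · have := atom_two_le hp hα hb1 hc₁; omega
    · have := atom_two_le hp hα hb1 hc₂; omega

lemma dist_ge_three (hp : p.Prime) (hα : 1 < α) (hb1 : p ^ α ≡ 1 [MOD b])
    {x : ℕ} {s t : Multiset ℕ}
    (hs : acmFactorization (p ^ α) (b * p ^ α) x s)
    (ht : acmFactorization (p ^ α) (b * p ^ α) x t)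
    (hc : Multiset.card s ≠ Multiset.card t) : 3 ≤ facDist s t := by
  have hds := Multiset.sub_add_inter s t
  have hdt := Multiset.sub_add_inter t s
  have hic : t ∩ s = s ∩ t := Multiset.inter_comm t s
  have hprods : (s - t).prod * (s ∩ t).prod = x := by
    rw [← Multiset.prod_add, hds]; exact hs.2
  have hprodt : (t - s).prod * (s ∩ t).prod = x := by
    rw [← hic, ← Multiset.prod_add, hdt]; exact ht.2
  have hpos : 0 < (s ∩ t).prod := by
    apply Multiset.prod_pos
    intro v hv
    exact atom_pos hp hα hb1 (hs.1 v (Multiset.mem_of_le Multiset.inter_le_left hv))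
  have hpp : (s - t).prod = (t - s).prod :=
    Nat.eq_of_mul_eq_mul_right hpos (hprods.trans hprodt.symm)
  have hcs : Multiset.card (s - t) + Multiset.card (s ∩ t) = Multiset.card s := by
    rw [← Multiset.card_add, hds]
  have hct : Multiset.card (t - s) + Multiset.card (s ∩ t) = Multiset.card t := by
    rw [← Multiset.card_add, ← hic, hdt]
  have hatomsub : ∀ v ∈ s - t, acmAtom (p ^ α) (b * p ^ α) v := fun v hv =>
    hs.1 v (Multiset.mem_of_le (Multiset.sub_le_self s t) hv)
  have hatomsub' : ∀ v ∈ t - s, acmAtom (p ^ α) (b * p ^ α) v := fun v hv =>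
    ht.1 v (Multiset.mem_of_le (Multiset.sub_le_self t s) hv)
  rcases Nat.lt_or_ge (Multiset.card (s - t)) (Multiset.card (t - s)) with h | h
  · have := prods_eq_aux hp hα hb1 hatomsub hatomsub' hpp h
    calc (3 : ℕ) ≤ Multiset.card (t - s) := this
      _ ≤ facDist s t := le_max_right _ _
  · have hlt : Multiset.card (t - s) < Multiset.card (s - t) := by omega
    have := prods_eq_aux hp hα hb1 hatomsub' hatomsub hpp.symm hlt
    calc (3 : ℕ) ≤ Multiset.card (s - t) := this
      _ ≤ facDist s t := le_max_left _ _

lemma chain_card_eq (hp : p.Prime) (hα : 1 < α) (hb1 : p ^ α ≡ 1 [MOD b])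
    {x N : ℕ} (hN : N < 3) :
    ∀ L : List (Multiset ℕ), L.Chain' (fun s t => facDist s t ≤ N) →
      (∀ z ∈ L, acmFactorization (p ^ α) (b * p ^ α) x z) →
      ∀ s, L.head? = some s → ∀ t, L.getLast? = some t →
      Multiset.card s = Multiset.card t := by
  intro L
  induction L with
  | nil => intro _ _ s hs; simp at hs
  | cons a L ih =>
    cases L with
    | nil =>
      intro _ _ s hs t ht
      simp at hs ht
      rw [← hs, ← ht]
    | cons b L' =>
      intro hch hmem s hs t ht
      have hchc := List.isChain_cons_cons.mp hch
      have hab : Multiset.card a = Multiset.card b := by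
        by_contra hcon
        have h3 := dist_ge_three hp hα hb1 (hmem a (by simp)) (hmem b (by simp)) hcon
        omega
      have hrec := ih hchc.2 (fun z hz => hmem z (List.mem_cons_of_mem _ hz)) b rfl t
        (by rw [← ht, List.getLast?_cons_cons])
      simp at hs
      rw [← hs, hab]
      exact hrec

lemma lower_bound (hp : p.Prime) (hpb : ¬ p ∣ b) (hα : 1 < α)
    (hb1 : p ^ α ≡ 1 [MOD b]) :
    ∀ N ∈ acmCatSet (p ^ α) (b * p ^ α), 3 ≤ N := by
  intro N hN
  by_contra hcon
  push_neg at hcon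
  obtain ⟨γ, rfl⟩ : ∃ γ, α = γ + 2 := ⟨α - 2, by omega⟩
  set q := p + b with hq
  have hpq : ¬ p ∣ q := by
    rw [hq]
    intro h
    exact hpb ((Nat.dvd_add_right (dvd_refl p)).mp h)
  have hqp : q ≡ p [MOD b] := Nat.add_mod_right p b
  have hA : acmAtom (p ^ (γ + 2)) (b * p ^ (γ + 2)) (p ^ ((γ + 2) + 0) * 1) :=
    atom_of_decomp hp hα hb1 (by omega) (Nat.Prime.not_dvd_one hp)
      (by simpa using Nat.ModEq.refl 1)
  have hBcong : p ^ (γ + 1) * q ≡ 1 [MOD b] := by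
    calc p ^ (γ + 1) * q ≡ p ^ (γ + 1) * p [MOD b] := Nat.ModEq.mul_left _ hqp
      _ = p ^ (γ + 2) := by rw [← pow_succ]
      _ ≡ 1 [MOD b] := hb1
  have hB : acmAtom (p ^ (γ + 2)) (b * p ^ (γ + 2)) (p ^ ((γ + 2) + (γ + 1)) * q) :=
    atom_of_decomp hp hα hb1 (by omega) hpq hBcong
  have hqq : ¬ p ∣ q * q := by
    intro h
    rcases (Nat.Prime.dvd_mul hp).mp h with h | h <;> exact hpq h
  have hDcong : p ^ γ * (q * q) ≡ 1 [MOD b] := by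
    calc p ^ γ * (q * q) ≡ p ^ γ * (p * p) [MOD b] :=
          Nat.ModEq.mul_left _ (hqp.mul hqp)
      _ = p ^ (γ + 2) := by ring
      _ ≡ 1 [MOD b] := hb1
  have hD : acmAtom (p ^ (γ + 2)) (b * p ^ (γ + 2)) (p ^ ((γ + 2) + γ) * (q * q)) :=
    atom_of_decomp hp hα hb1 (by omega) hqq hDcong
  set B₀ := p ^ ((γ + 2) + (γ + 1)) * q with hB₀
  set A₀ := p ^ ((γ + 2) + 0) * 1 with hA₀
  set D₀ := p ^ ((γ + 2) + γ) * (q * q) with hD₀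
  set x₀ := B₀ * B₀ with hx₀
  have hmem : acmMem (p ^ (γ + 2)) (b * p ^ (γ + 2)) x₀ :=
    mem_mul hp hb1 hB.1 hB.1
  have hfac₁ : acmFactorization (p ^ (γ + 2)) (b * p ^ (γ + 2)) x₀ (B₀ ::ₘ {B₀}) := by
    constructor
    · intro u hu
      rcases Multiset.mem_cons.mp hu with rfl | hu
      · exact hB
      · rw [Multiset.mem_singleton.mp hu]; exact hB
    · rw [Multiset.prod_cons, Multiset.prod_singleton]
  have hfac₂ : acmFactorization (p ^ (γ + 2)) (b * p ^ (γ + 2)) x₀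
      (A₀ ::ₘ A₀ ::ₘ {D₀}) := by
    constructor
    · intro u hu
      rcases Multiset.mem_cons.mp hu with rfl | hu
      · exact hA
      rcases Multiset.mem_cons.mp hu with rfl | hu
      · exact hA
      · rw [Multiset.mem_singleton.mp hu]; exact hD
    · rw [Multiset.prod_cons, Multiset.prod_cons, Multiset.prod_singleton,
        hA₀, hD₀, hx₀, hB₀]
      have h1 : ((γ + 2) + 0) + (((γ + 2) + 0) + ((γ + 2) + γ))
          = ((γ + 2) + (γ + 1)) + ((γ + 2) + (γ + 1)) := by omega
      calc p ^ ((γ + 2) + 0) * 1 * (p ^ ((γ + 2) + 0) * 1 * (p ^ ((γ + 2) + γ) * (q * q)))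
          = p ^ (((γ + 2) + 0) + (((γ + 2) + 0) + ((γ + 2) + γ))) * (q * q) := by
            rw [pow_add, pow_add]; ring
        _ = p ^ (((γ + 2) + (γ + 1)) + ((γ + 2) + (γ + 1))) * (q * q) := by rw [h1]
        _ = (p ^ ((γ + 2) + (γ + 1)) * q) * (p ^ ((γ + 2) + (γ + 1)) * q) := by
            rw [pow_add]; ring
  obtain ⟨L, hne, hhd, hlast, hmemL, hch⟩ := hN x₀ hmem _ _ hfac₁ hfac₂
  have := chain_card_eq hp hα hb1 hcon L hch hmemL _ hhd _ hlast
  simp at this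

end AuxACM

/-- The local singular ACM `M = M_{p^α, b p^α}` with `α = β > 1` has
catenary degree 3. -/
theorem local_catenary_alpha_eq_beta (p b α : ℕ) (hp : p.Prime) (hpb : ¬ p ∣ b)
    (hα : 1 < α) (hacm : p ^ α * p ^ α ≡ p ^ α [MOD b * p ^ α]) :
    IsLeast (acmCatSet (p ^ α) (b * p ^ α)) 3 := by
  have hb1 := AuxACM.pow_alpha_one hp hpb hα hacm
  exact ⟨AuxACM.three_mem hp hα hb1, fun N hN => AuxACM.lower_bound hp hpb hα hb1 N hN⟩
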